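/- Let P ⊆ ℝ^n be a 0/1 polytope such that the zero vector 0 is a vertex of P and every vertex of P has at most M coordinates equal to 1, and let c ∈ ℝ^n. Then every Shadow-rule path on P with auxiliary vector v = 1 (the all-ones vector) and objective c starting at 0 has length at most M and contains a vertex maximizing ⟨c,·⟩ over P. -/

import Mathlib

open Finset

attribute [local instance] Classical.propDecidable

noncomputable section

/-- Standard dot product on `Fin n → ℝ`. -/
def dotR {n : ℕ} (c x : Fin n → ℝ) : ℝ := ∑ i, c i * x i

/-- A polytope: the convex hull of a finite nonempty set of points. -/
def IsPolytope {n : ℕ} (P : Set (Fin n → ℝ)) : Prop :=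
  ∃ V : Finset (Fin n → ℝ), V.Nonempty ∧ P = convexHull ℝ (V : Set (Fin n → ℝ))

/-- A 0/1 polytope: the convex hull of a finite nonempty subset of `{0,1}^n`. -/
def IsPolytope01 {n : ℕ} (P : Set (Fin n → ℝ)) : Prop :=
  ∃ V : Finset (Fin n → ℝ), V.Nonempty ∧ (∀ w ∈ V, ∀ i, w i = 0 ∨ w i = 1) ∧
    P = convexHull ℝ (V : Set (Fin n → ℝ))

/-- A vertex of `P` is an extreme point of `P`. -/
def IsVertex {n : ℕ} (P : Set (Fin n → ℝ)) (x : Fin n → ℝ) : Prop :=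
  x ∈ P.extremePoints ℝ

/-- Two distinct vertices are adjacent when the segment between them is a face. -/
def Adjacent {n : ℕ} (P : Set (Fin n → ℝ)) (x y : Fin n → ℝ) : Prop :=
  IsVertex P x ∧ IsVertex P y ∧ x ≠ y ∧ IsExtreme ℝ P (segment ℝ x y)

/-- `u` is a `w`-improving neighbor of `x`. -/
def ImpNbr {n : ℕ} (P : Set (Fin n → ℝ)) (w x u : Fin n → ℝ) : Prop :=
  Adjacent P x u ∧ dotR w x < dotR w u

/-- A Shadow-rule path on `P` with auxiliary vector `v` and objective `c`:
vertices `x 0, …, x k`, each step a `v`-improving neighbor maximizing the slope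
`⟨c, u − xᵢ⟩ / ⟨v, u − xᵢ⟩` over all `v`-improving neighbors, and the last vertex
has no `v`-improving neighbor. -/
def ShadowPath {n : ℕ} (P : Set (Fin n → ℝ)) (c v : Fin n → ℝ) (k : ℕ)
    (x : ℕ → Fin n → ℝ) : Prop :=
  (∀ i ≤ k, IsVertex P (x i)) ∧
  (∀ i < k, ImpNbr P v (x i) (x (i + 1)) ∧
    ∀ u, ImpNbr P v (x i) u →
      dotR c (u - x i) / dotR v (u - x i)
        ≤ dotR c (x (i + 1) - x i) / dotR v (x (i + 1) - x i)) ∧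
  (∀ u, ¬ ImpNbr P v (x k) u)

/-- `f(u)` relative to `x0`: the largest index (in `1, …, n` labelling) where `u`
differs from `x0`, and `0` if there is none. -/
def lastIdx {n : ℕ} (x0 u : Fin n → ℝ) : ℕ :=
  (Finset.univ.filter fun j : Fin n => u j ≠ x0 j).sup fun j => (j : ℕ) + 1

/-- `f(w)` for a 0/1 vector: the largest index (in `1, …, n` labelling) with
`w j = 1`, and `0` for the zero vector. -/
def lastOne {n : ℕ} (w : Fin n → ℝ) : ℕ :=
  (Finset.univ.filter fun j : Fin n => w j = 1).sup fun j => (j : ℕ) + 1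


namespace Slim

variable {n : ℕ}

lemma dotR_add_right (w a b : Fin n → ℝ) : dotR w (a + b) = dotR w a + dotR w b := by
  simp [dotR, mul_add, Finset.sum_add_distrib]

lemma dotR_smul_right (w : Fin n → ℝ) (r : ℝ) (a : Fin n → ℝ) :
    dotR w (r • a) = r * dotR w a := by
  simp only [dotR, Pi.smul_apply, smul_eq_mul, Finset.mul_sum]
  exact Finset.sum_congr rfl fun i _ => by ring

/-- dot product as a linear map in the second argument. -/
def dotLin (w : Fin n → ℝ) : (Fin n → ℝ) →ₗ[ℝ] ℝ where
  toFun := dotR w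
  map_add' := dotR_add_right w
  map_smul' := fun r a => dotR_smul_right w r a

@[simp] lemma dotLin_apply (w a : Fin n → ℝ) : dotLin w a = dotR w a := rfl

lemma dotR_sub_right (w a b : Fin n → ℝ) : dotR w (a - b) = dotR w a - dotR w b :=
  map_sub (dotLin w) a b

@[simp] lemma dotR_zero_right (w : Fin n → ℝ) : dotR w (0 : Fin n → ℝ) = 0 :=
  map_zero (dotLin w)

lemma dotR_sub_smul_left (c v y : Fin n → ℝ) (l : ℝ) :
    dotR (c - l • v) y = dotR c y - l * dotR v y := by
  simp [dotR, sub_mul, Finset.sum_sub_distrib, Finset.mul_sum, mul_assoc]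

lemma dotR_self_pos {d : Fin n → ℝ} (hd : d ≠ 0) : 0 < dotR d d := by
  have : ∃ i, d i ≠ 0 := Function.ne_iff.1 hd
  obtain ⟨i, hi⟩ := this
  have : (0:ℝ) < d i * d i := mul_self_pos.2 hi
  refine Finset.sum_pos' (fun j _ => mul_self_nonneg _) ⟨i, Finset.mem_univ i, this⟩

/-- A linear functional is at most `m` on the convex hull if it is on the generators. -/
lemma hull_bound {V : Finset (Fin n → ℝ)} (L : (Fin n → ℝ) →ₗ[ℝ] ℝ) {m : ℝ}
    (h : ∀ a ∈ V, L a ≤ m) {p : Fin n → ℝ} (hp : p ∈ convexHull ℝ (V : Set (Fin n → ℝ))) :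
    L p ≤ m := by
  have : convexHull ℝ (V : Set (Fin n → ℝ)) ⊆ {q | L q ≤ m} := by
    apply convexHull_min
    · intro a ha; exact h a (by exact_mod_cast ha)
    · exact convex_halfSpace_le (L.isLinear) m
  exact this hp

/-- The argmax of a linear functional on a convex set is a face. -/
lemma isExtreme_face {P : Set (Fin n → ℝ)} (L : (Fin n → ℝ) →ₗ[ℝ] ℝ) (m : ℝ)
    (hle : ∀ p ∈ P, L p ≤ m) :
    IsExtreme ℝ P {p | p ∈ P ∧ L p = m} := by
  constructor
  · intro p hp; exact hp.1
  · rintro x₁ hx₁ x₂ hx₂ p ⟨hpP, hpm⟩ hseg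
    obtain ⟨a, b, ha, hb, hab, hpe⟩ := hseg
    have h1 : L x₁ ≤ m := hle _ hx₁
    have h2 : L x₂ ≤ m := hle _ hx₂
    have hLp : a * L x₁ + b * L x₂ = m := by
      have := congrArg L hpe
      simpa [map_add, map_smul, smul_eq_mul, hpm] using this
    have hm : a * m + b * m = m := by rw [← add_mul, hab, one_mul]
    have e1 : L x₁ = m := by
      by_contra hne
      have hlt : L x₁ < m := lt_of_le_of_ne h1 hne
      have := add_lt_add_of_lt_of_le (mul_lt_mul_of_pos_left hlt ha)
        (mul_le_mul_of_nonneg_left h2 hb.le)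
      linarith
    have e2 : L x₂ = m := by
      by_contra hne
      have hlt : L x₂ < m := lt_of_le_of_ne h2 hne
      have := add_lt_add_of_le_of_lt (mul_le_mul_of_nonneg_left h1 ha.le)
        (mul_lt_mul_of_pos_left hlt hb)
      linarith
    exact ⟨hx₁, e1⟩


/-- Support lemma: a hull point where a linear functional attains its max over
the generators lies in the hull of the maximizing generators. -/
lemma mem_hull_filter {V : Finset (Fin n → ℝ)} (L : (Fin n → ℝ) →ₗ[ℝ] ℝ) {m : ℝ}
    (hle : ∀ a ∈ V, L a ≤ m) {p : Fin n → ℝ}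
    (hp : p ∈ convexHull ℝ (V : Set (Fin n → ℝ))) (hpm : L p = m) :
    p ∈ convexHull ℝ ((V.filter fun a => L a = m : Finset (Fin n → ℝ)) : Set (Fin n → ℝ)) := by
  rw [Finset.convexHull_eq] at hp
  obtain ⟨ww, hw0, hw1, hwc⟩ := hp
  have hLp : ∑ a ∈ V, ww a * L a = m := by
    have : L (V.centerMass ww id) = ∑ a ∈ V, ww a * L a := by
      rw [Finset.centerMass_eq_of_sum_1 _ _ hw1, map_sum]
      exact Finset.sum_congr rfl fun a _ => by simp [smul_eq_mul]
    rw [hwc, hpm] at this; exact this.symm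
  have hzero : ∀ a ∈ V, ww a * (m - L a) = 0 := by
    have hsum : ∑ a ∈ V, ww a * (m - L a) = 0 := by
      have : ∑ a ∈ V, ww a * (m - L a) = m * (∑ a ∈ V, ww a) - ∑ a ∈ V, ww a * L a := by
        rw [Finset.mul_sum, ← Finset.sum_sub_distrib]
        exact Finset.sum_congr rfl fun a _ => by ring
      rw [this, hw1, hLp]; ring
    intro a ha
    exact (Finset.sum_eq_zero_iff_of_nonneg fun b hb =>
      mul_nonneg (hw0 b hb) (sub_nonneg.2 (hle b hb))).1 hsum a ha
  have hsupp : (V.filter fun a => ww a ≠ 0) ⊆ V.filter fun a => L a = m := by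
    intro a ha
    rw [Finset.mem_filter] at ha ⊢
    refine ⟨ha.1, ?_⟩
    have := hzero a ha.1
    rcases mul_eq_zero.1 this with h | h
    · exact absurd h ha.2
    · linarith [sub_eq_zero.1 h]
  have hmem : p ∈ convexHull ℝ ((V.filter fun a => ww a ≠ 0 : Finset (Fin n → ℝ)) :
      Set (Fin n → ℝ)) := by
    have hcm : (V.filter fun a => ww a ≠ 0).centerMass ww id = p := by
      rw [← hwc]
      convert Finset.centerMass_filter_ne_zero (t := V) (w := ww) id using 2
    rw [← hcm]
    refine Finset.centerMass_mem_convexHull _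
      (fun a ha => hw0 a (Finset.mem_filter.1 ha).1)
      (by rw [Finset.sum_filter_ne_zero, hw1]; norm_num)
      (fun a ha => by exact ha)
  exact convexHull_mono (by exact_mod_cast hsupp) hmem

/-- A generic vector: nonzero dot product with every nonzero element of `D`. -/
lemma exists_generic (D : Finset (Fin n → ℝ)) :
    ∃ z : Fin n → ℝ, ∀ d ∈ D, d ≠ 0 → dotR z d ≠ 0 := by
  classical
  induction D using Finset.induction_on with
  | empty => exact ⟨0, fun d hd => absurd hd (Finset.notMem_empty d)⟩
  | @insert d₀ D hd₀D ih =>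
    obtain ⟨z, hz⟩ := ih
    by_cases h0 : d₀ = 0
    · exact ⟨z, fun d hd hdne => by
        rcases Finset.mem_insert.1 hd with rfl | hd
        · exact absurd h0 hdne
        · exact hz d hd hdne⟩
    · -- perturb z in direction d₀
      set bad : Finset ℝ :=
        (insert d₀ D).image (fun d =>
          if dotR d₀ d = 0 then (37 : ℝ) else -dotR z d / dotR d₀ d) with hbad
      obtain ⟨ε, hε⟩ := Infinite.exists_notMem_finset bad
      refine ⟨z + ε • d₀, fun d hd hdne => ?_⟩
      have key : ∀ d' ∈ insert d₀ D, d' ≠ 0 →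
          (dotR d₀ d' ≠ 0 ∨ dotR z d' ≠ 0) → dotR (z + ε • d₀) d' ≠ 0 := by
        intro d' hd' hd'ne hcase
        have hdot : dotR (z + ε • d₀) d' = dotR z d' + ε * dotR d₀ d' := by
          simp [dotR, add_mul, Finset.sum_add_distrib, Finset.mul_sum]
          exact Finset.sum_congr rfl fun i _ => by ring
        rcases hcase with hc | hc
        · intro heq
          rw [hdot] at heq
          have : ε = -dotR z d' / dotR d₀ d' := by field_simp; linarith
          apply hε
          rw [hbad]
          refine Finset.mem_image.2 ⟨d', hd', ?_⟩
          rw [if_neg hc, ← this]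
        · rcases eq_or_ne (dotR d₀ d') 0 with h | h
          · rw [hdot, h]; simpa using hc
          · intro heq
            rw [hdot] at heq
            have : ε = -dotR z d' / dotR d₀ d' := by field_simp; linarith
            apply hε
            rw [hbad]
            refine Finset.mem_image.2 ⟨d', hd', ?_⟩
            rw [if_neg h, ← this]
      rcases Finset.mem_insert.1 hd with rfl | hdD
      · exact key d (Finset.mem_insert_self d D) hdne (Or.inl (ne_of_gt (dotR_self_pos hdne)))
      · exact key d (Finset.mem_insert.2 (Or.inr hdD)) hdne (Or.inr (hz d hdD hdne))


section ImpNbrLemma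

variable {V : Finset (Fin n → ℝ)} {x w y : Fin n → ℝ}

set_option maxHeartbeats 2000000 in
/-- **Key lemma**: if a vertex `x` of the polytope `conv V` is not a maximizer of
the linear functional `⟨w,·⟩`, then `x` has a `w`-improving neighbor. -/
lemma exists_impNbr (hx : IsVertex (convexHull ℝ (V : Set (Fin n → ℝ))) x)
    (hy : y ∈ convexHull ℝ (V : Set (Fin n → ℝ)))
    (hwy : dotR w x < dotR w y) :
    ∃ u, ImpNbr (convexHull ℝ (V : Set (Fin n → ℝ))) w x u := by
  classical
  set P : Set (Fin n → ℝ) := convexHull ℝ (V : Set (Fin n → ℝ)) with hPdef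
  have hxV : x ∈ V := by exact_mod_cast extremePoints_convexHull_subset hx
  set V' : Finset (Fin n → ℝ) := V.erase x with hV'def
  -- V' is nonempty
  have hV'ne : V'.Nonempty := by
    by_contra hne
    rw [Finset.not_nonempty_iff_eq_empty] at hne
    have : V = {x} := by
      apply Finset.eq_singleton_iff_unique_mem.2
      refine ⟨hxV, fun a ha => ?_⟩
      by_contra hax
      exact (Finset.notMem_empty a) (hne ▸ Finset.mem_erase.2 ⟨hax, ha⟩)
    rw [hPdef, this] at hy
    simp only [Finset.coe_singleton, convexHull_singleton, Set.mem_singleton_iff] at hy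
    rw [hy] at hwy; exact lt_irrefl _ hwy
  -- x is not in the hull of the other generators
  have hxnot : x ∉ convexHull ℝ (V' : Set (Fin n → ℝ)) := by
    intro hmem
    have hsub : convexHull ℝ (V' : Set (Fin n → ℝ)) ⊆ P := by
      rw [hPdef]; exact convexHull_mono (by exact_mod_cast Finset.erase_subset x V)
    have hxe : x ∈ (convexHull ℝ (V' : Set (Fin n → ℝ))).extremePoints ℝ := by
      rw [mem_extremePoints]
      exact ⟨hmem, fun x₁ h₁ x₂ h₂ hseg => ⟨hx.2 (hsub h₁) (hsub h₂) hseg,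
        hx.2 (hsub h₂) (hsub h₁) (by rwa [openSegment_symm] at hseg)⟩⟩
    have : x ∈ V' := by exact_mod_cast extremePoints_convexHull_subset hxe
    exact (Finset.mem_erase.1 this).1 rfl
  -- separating functional
  obtain ⟨f, m₀, hfa, hfx⟩ := geometric_hahn_banach_closed_point
    (convex_convexHull ℝ _) ((V'.finite_toSet.isCompact_convexHull ℝ).isClosed) hxnot
  have hfV' : ∀ a ∈ V', f a < f x := fun a ha =>
    lt_trans (hfa a (subset_convexHull ℝ _ (by exact_mod_cast ha))) hfx
  -- the improving generators
  set S : Finset (Fin n → ℝ) := V.filter (fun a => dotR w x < dotR w a) with hSdef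
  have hSne : S.Nonempty := by
    by_contra hne
    rw [Finset.not_nonempty_iff_eq_empty] at hne
    have hb : ∀ a ∈ V, dotLin w a ≤ dotR w x := by
      intro a ha
      by_contra hgt
      push_neg at hgt
      exact (Finset.notMem_empty a) (hne ▸ Finset.mem_filter.2 ⟨ha, hgt⟩)
    exact absurd (hull_bound (dotLin w) hb hy) (not_le.2 hwy)
  have hxS : x ∉ S := fun hxs => lt_irrefl _ (Finset.mem_filter.1 hxs).2
  -- notation
  set Wf : (Fin n → ℝ) → ℝ := fun a => dotR w a - dotR w x with hWf
  have hWpos : ∀ a ∈ S, 0 < Wf a := fun a ha => sub_pos.2 (Finset.mem_filter.1 ha).2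
  have hSV : S ⊆ V := Finset.filter_subset _ _
  -- a generic direction breaking ties
  set D : Finset (Fin n → ℝ) :=
    (V ×ˢ V).image (fun p => Wf p.2 • (p.1 - x) - Wf p.1 • (p.2 - x)) with hDdef
  obtain ⟨z, hz⟩ := exists_generic D
  set Zf : (Fin n → ℝ) → ℝ := fun a => dotR z a - dotR z x with hZf
  -- bound for ε keeping the exposing property
  set g : (Fin n → ℝ) → ℝ := fun a => if Zf a = 0 then 1 else (f x - f a) / |Zf a| with hg
  obtain ⟨amin, haminV', hamin⟩ := Finset.exists_min_image V' g hV'ne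
  set δ : ℝ := g amin with hδ
  have hgpos : ∀ a ∈ V', 0 < g a := by
    intro a ha
    rw [hg]
    simp only
    split_ifs with h
    · norm_num
    · exact div_pos (by linarith [hfV' a ha]) (abs_pos.2 h)
  have hδpos : 0 < δ := hgpos amin haminV'
  -- the tie-creating bad values of ε
  set badF : Finset ℝ := (V ×ˢ V).image (fun p =>
      if dotR z (Wf p.2 • (p.1 - x) - Wf p.1 • (p.2 - x)) = 0 then 0
      else -((f p.1 - f x) * Wf p.2 - (f p.2 - f x) * Wf p.1) /
        dotR z (Wf p.2 • (p.1 - x) - Wf p.1 • (p.2 - x))) with hbadF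
  have hIoo : (Set.Ioo (0:ℝ) δ).Infinite := Set.infinite_coe_iff.1 (Set.Ioo.infinite hδpos)
  obtain ⟨ε, hεmem, hεbad⟩ := (hIoo.diff badF.finite_toSet).nonempty
  obtain ⟨hε0, hεδ⟩ := hεmem
  -- the perturbed exposing functional values
  set G : (Fin n → ℝ) → ℝ := fun a => (f a - f x) + ε * Zf a with hG
  have hGneg : ∀ a ∈ V', G a < 0 := by
    intro a ha
    have h1 : ε * Zf a ≤ ε * |Zf a| := mul_le_mul_of_nonneg_left (le_abs_self _) hε0.le
    have h2 : ε * |Zf a| < f x - f a := by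
      rcases eq_or_ne (Zf a) 0 with h | h
      · rw [h, abs_zero, mul_zero]; linarith [hfV' a ha]
      · have hga : δ ≤ g a := hamin a ha
        have hlt : ε < g a := lt_of_lt_of_le hεδ hga
        rw [hg] at hlt
        simp only [if_neg h] at hlt
        calc ε * |Zf a| < ((f x - f a) / |Zf a|) * |Zf a| :=
              mul_lt_mul_of_pos_right hlt (abs_pos.2 h)
          _ = f x - f a := div_mul_cancel₀ _ (ne_of_gt (abs_pos.2 h))
    rw [hG]; simp only; linarith
  have hGnegS : ∀ a ∈ S, G a < 0 := fun a ha =>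
    hGneg a (Finset.mem_erase.2 ⟨fun hax => hxS (hax ▸ ha), hSV ha⟩)
  -- the rotation parameter
  set ta : (Fin n → ℝ) → ℝ := fun a => -G a / Wf a with hta
  obtain ⟨astar, hastarS, hastar⟩ := Finset.exists_min_image S ta hSne
  set tstar : ℝ := ta astar with htstar
  have htapos : ∀ a ∈ S, 0 < ta a := fun a ha =>
    div_pos (by linarith [hGnegS a ha]) (hWpos a ha)
  have htstarpos : 0 < tstar := htapos astar hastarS
  set T : Finset (Fin n → ℝ) := S.filter (fun a => ta a = tstar) with hT
  have hTne : T.Nonempty := ⟨astar, Finset.mem_filter.2 ⟨hastarS, rfl⟩⟩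
  obtain ⟨u, huT, humax⟩ := Finset.exists_max_image T Wf hTne
  have huS : u ∈ S := (Finset.mem_filter.1 huT).1
  have huV : u ∈ V := hSV huS
  have hWu : 0 < Wf u := hWpos u huS
  have hune : u ≠ x := by
    intro h
    rw [h] at hWu
    rw [hWf] at hWu
    simp at hWu
  have hxP : x ∈ P := subset_convexHull ℝ _ (by exact_mod_cast hxV)
  have huP : u ∈ P := subset_convexHull ℝ _ (by exact_mod_cast huV)
  -- the functional exposing the segment [x, u]
  set Φ : (Fin n → ℝ) →ₗ[ℝ] ℝ := f.toLinearMap + ε • dotLin z + tstar • dotLin w with hΦdef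
  have hΦ : ∀ p, Φ p = f p + ε * dotR z p + tstar * dotR w p := by
    intro p
    rw [hΦdef]
    simp [dotLin]
  have hΦdiff : ∀ a, Φ a - Φ x = G a + tstar * Wf a := by
    intro a
    rw [hΦ a, hΦ x, hG, hZf, hWf]
    simp only
    ring
  have hGta : ∀ a ∈ S, G a = -(ta a * Wf a) := by
    intro a ha
    have hWa := ne_of_gt (hWpos a ha)
    rw [hta]
    simp only
    rw [div_mul_cancel₀ _ hWa, neg_neg]
  have hkey_le : ∀ a ∈ V, Φ a ≤ Φ x := by
    intro a ha
    rcases eq_or_ne a x with rfl | hax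
    · exact le_refl _
    have hd := hΦdiff a
    by_cases haS : a ∈ S
    · have h1 : tstar ≤ ta a := hastar a haS
      have h2 : G a = -(ta a * Wf a) := hGta a haS
      nlinarith [mul_le_mul_of_nonneg_right h1 (le_of_lt (hWpos a haS))]
    · have hWa : Wf a ≤ 0 := by
        by_contra hgt
        push_neg at hgt
        exact haS (Finset.mem_filter.2 ⟨ha, by rw [hWf] at hgt; simp only at hgt; linarith⟩)
      have hGa : G a < 0 := hGneg a (Finset.mem_erase.2 ⟨hax, ha⟩)
      nlinarith [mul_nonpos_of_nonneg_of_nonpos htstarpos.le hWa]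
  have hkey_eq : ∀ a ∈ V, Φ a = Φ x → a = x ∨ a ∈ T := by
    intro a ha heq
    rcases eq_or_ne a x with rfl | hax
    · exact Or.inl rfl
    have hd := hΦdiff a
    rw [heq, sub_self] at hd
    by_cases haS : a ∈ S
    · refine Or.inr (Finset.mem_filter.2 ⟨haS, ?_⟩)
      have h2 : G a = -(ta a * Wf a) := hGta a haS
      have hWa := hWpos a haS
      have : Wf a * (tstar - ta a) = 0 := by linear_combination -hd - h2
      rcases mul_eq_zero.1 this with h | h
      · exact absurd h (ne_of_gt hWa)
      · linarith
    · exfalso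
      have hWa : Wf a ≤ 0 := by
        by_contra hgt
        push_neg at hgt
        exact haS (Finset.mem_filter.2 ⟨ha, by rw [hWf] at hgt; simp only at hgt; linarith⟩)
      have hGa : G a < 0 := hGneg a (Finset.mem_erase.2 ⟨hax, ha⟩)
      nlinarith [mul_nonpos_of_nonneg_of_nonpos htstarpos.le hWa]
  -- members of T lie on the ray from x through u
  have hray : ∀ a ∈ T, ∃ s : ℝ, 0 < s ∧ s ≤ 1 ∧ a - x = s • (u - x) := by
    intro a haT
    rcases eq_or_ne a u with rfl | hau
    · exact ⟨1, one_pos, le_refl 1, (one_smul ℝ _).symm⟩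
    have haS : a ∈ S := (Finset.mem_filter.1 haT).1
    have haV : a ∈ V := hSV haS
    have hWa : 0 < Wf a := hWpos a haS
    have htaa : ta a = tstar := (Finset.mem_filter.1 haT).2
    have htau : ta u = tstar := (Finset.mem_filter.1 huT).2
    have hcross : G a * Wf u = G u * Wf a := by
      have h1 : -G a / Wf a = -G u / Wf u := by
        rw [hta] at htaa htau
        simp only at htaa htau
        rw [htaa, htau]
      rw [div_eq_div_iff (ne_of_gt hWa) (ne_of_gt hWu)] at h1
      linarith
    have hdz : dotR z (Wf u • (a - x) - Wf a • (u - x))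
        = Wf u * Zf a - Wf a * Zf u := by
      simp only [dotR_sub_right, dotR_smul_right, hZf]
    have hexp : ((f a - f x) * Wf u - (f u - f x) * Wf a)
        + ε * dotR z (Wf u • (a - x) - Wf a • (u - x)) = 0 := by
      rw [hdz]
      rw [hG] at hcross
      simp only at hcross
      linear_combination hcross
    have heD : Wf u • (a - x) - Wf a • (u - x) ∈ D := by
      rw [hDdef]
      exact Finset.mem_image.2 ⟨(a, u), Finset.mem_product.2 ⟨haV, huV⟩, rfl⟩
    have he0 : Wf u • (a - x) - Wf a • (u - x) = 0 := by
      by_contra hne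
      have hdzne := hz _ heD hne
      have hεeq : ε = -((f a - f x) * Wf u - (f u - f x) * Wf a) /
          dotR z (Wf u • (a - x) - Wf a • (u - x)) := by
        field_simp
        linarith [hexp]
      apply hεbad
      rw [hbadF]
      refine Finset.mem_coe.2 (Finset.mem_image.2 ⟨(a, u),
        Finset.mem_product.2 ⟨haV, huV⟩, ?_⟩)
      rw [if_neg hdzne, ← hεeq]
    have heq2 : Wf u • (a - x) = Wf a • (u - x) := sub_eq_zero.1 he0
    refine ⟨Wf a / Wf u, div_pos hWa hWu, (div_le_one hWu).2 (humax a haT), ?_⟩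
    have := congrArg (fun q => (Wf u)⁻¹ • q) heq2
    rw [inv_smul_smul₀ (ne_of_gt hWu)] at this
    rw [this, smul_smul, div_eq_inv_mul]
  -- the face given by Φ is the segment [x, u]
  have hΦleP : ∀ p ∈ P, Φ p ≤ Φ x := fun p hp => hull_bound Φ hkey_le hp
  have hface := isExtreme_face (P := P) Φ (Φ x) hΦleP
  have hΦu : Φ u = Φ x := by
    have hd := hΦdiff u
    have h2 : G u = -(ta u * Wf u) := hGta u huS
    have htau : ta u = tstar := (Finset.mem_filter.1 huT).2
    rw [htau] at h2
    linarith
  have hsegsub : ∀ a ∈ V.filter (fun a => Φ a = Φ x), a ∈ segment ℝ x u := by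
    intro a ha
    obtain ⟨haV, haeq⟩ := Finset.mem_filter.1 ha
    rcases hkey_eq a haV haeq with hax | haT
    · rw [hax]; exact left_mem_segment ℝ x u
    obtain ⟨s, hs0, hs1, hsa⟩ := hray a haT
    refine ⟨1 - s, s, by linarith, hs0.le, by ring, ?_⟩
    have : a = x + s • (u - x) := by rw [← hsa]; abel
    rw [this]
    module
  have hFeq : {p | p ∈ P ∧ Φ p = Φ x} = segment ℝ x u := by
    apply Set.Subset.antisymm
    · rintro p ⟨hpP, hpm⟩
      have hp' := mem_hull_filter Φ hkey_le hpP hpm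
      exact convexHull_min (fun a ha => hsegsub a (by exact_mod_cast ha))
        (convex_segment x u) hp'
    · intro p hp
      refine ⟨(convex_convexHull ℝ _).segment_subset hxP huP hp, ?_⟩
      obtain ⟨s1, s2, hs1, hs2, hsum, heqp⟩ := hp
      rw [← heqp, map_add, map_smul, map_smul, smul_eq_mul, smul_eq_mul, hΦu]
      linear_combination (Φ x) * hsum
  -- u is a vertex of P
  obtain ⟨δ', hδ'pos, hδ'R⟩ : ∃ d : ℝ, 0 < d ∧
      ∀ a ∈ V.filter (fun a => Φ a < Φ x), d * (Wf a - Wf u) < Φ x - Φ a := by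
    set R : Finset (Fin n → ℝ) := V.filter (fun a => Φ a < Φ x) with hR
    rcases R.eq_empty_or_nonempty with hRe | hRne
    · exact ⟨1, one_pos, fun a ha => absurd ha (by rw [hRe]; exact Finset.notMem_empty a)⟩
    · obtain ⟨b, hbR, hb⟩ := Finset.exists_min_image R
        (fun a => (Φ x - Φ a) / (1 + |Wf a - Wf u|)) hRne
      have hbpos : 0 < (Φ x - Φ b) / (1 + |Wf b - Wf u|) := by
        apply div_pos
        · have := (Finset.mem_filter.1 hbR).2; linarith
        · positivity
      refine ⟨(Φ x - Φ b) / (1 + |Wf b - Wf u|), hbpos, fun a ha => ?_⟩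
      have h1 : (Φ x - Φ b) / (1 + |Wf b - Wf u|) ≤ (Φ x - Φ a) / (1 + |Wf a - Wf u|) :=
        hb a ha
      have haa : 0 < Φ x - Φ a := by have := (Finset.mem_filter.1 ha).2; linarith
      have hpos1 : (0:ℝ) < 1 + |Wf a - Wf u| := by positivity
      calc (Φ x - Φ b) / (1 + |Wf b - Wf u|) * (Wf a - Wf u)
          ≤ (Φ x - Φ b) / (1 + |Wf b - Wf u|) * |Wf a - Wf u| :=
            mul_le_mul_of_nonneg_left (le_abs_self _) hbpos.le
        _ < (Φ x - Φ b) / (1 + |Wf b - Wf u|) * (1 + |Wf a - Wf u|) := by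
            apply mul_lt_mul_of_pos_left _ hbpos
            linarith
        _ ≤ (Φ x - Φ a) / (1 + |Wf a - Wf u|) * (1 + |Wf a - Wf u|) :=
            mul_le_mul_of_nonneg_right h1 hpos1.le
        _ = Φ x - Φ a := div_mul_cancel₀ _ (ne_of_gt hpos1)
  set Ψ : (Fin n → ℝ) →ₗ[ℝ] ℝ := Φ + δ' • dotLin w with hΨdef
  have hΨ : ∀ p, Ψ p = Φ p + δ' * dotR w p := by
    intro p
    rw [hΨdef]
    simp [dotLin]
  have hΨlt : ∀ a ∈ V, a ≠ u → Ψ a < Ψ u := by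
    intro a ha hau
    have hdiff : Ψ a - Ψ u = (Φ a - Φ x) + δ' * (Wf a - Wf u) := by
      rw [hΨ a, hΨ u, hΦu, hWf]
      simp only
      ring
    by_cases haR : a ∈ V.filter (fun a => Φ a < Φ x)
    · have := hδ'R a haR
      have hΦa := (Finset.mem_filter.1 haR).2
      linarith
    · have hΦa : Φ a = Φ x := by
        have h1 := hkey_le a ha
        by_contra hne
        exact haR (Finset.mem_filter.2 ⟨ha, lt_of_le_of_ne h1 hne⟩)
      rcases hkey_eq a ha hΦa with rfl | haT
      · have hWx : Wf a = 0 := by rw [hWf]; simp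
        have : Ψ a - Ψ u = δ' * (0 - Wf u) := by rw [hdiff, hΦa, hWx]; ring
        nlinarith [mul_pos hδ'pos hWu]
      · have hle : Wf a ≤ Wf u := humax a haT
        have hneW : Wf a ≠ Wf u := by
          intro heqW
          obtain ⟨s, hs0, hs1, hsa⟩ := hray a haT
          have hWs : Wf a = s * Wf u := by
            have := congrArg (dotLin w) hsa
            rw [map_sub, map_smul] at this
            simp only [dotLin_apply, smul_eq_mul] at this
            rw [hWf]
            simp only
            rw [dotR_sub_right] at this
            linarith [this]
          rw [heqW] at hWs
          have hs : s = 1 := by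
            have h0 : (s - 1) * Wf u = 0 := by linarith
            rcases mul_eq_zero.1 h0 with h | h
            · linarith
            · exact absurd h (ne_of_gt hWu)
          rw [hs, one_smul] at hsa
          exact hau (sub_left_inj.1 hsa)
        have hlt : Wf a < Wf u := lt_of_le_of_ne hle hneW
        have hneg : δ' * (Wf a - Wf u) < 0 := by
          have := mul_pos hδ'pos (sub_pos.2 hlt)
          nlinarith
        rw [hΦa] at hdiff
        linarith
  have hΨleV : ∀ a ∈ V, Ψ a ≤ Ψ u := by
    intro a ha
    rcases eq_or_ne a u with rfl | hau
    · exact le_refl _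
    · exact (hΨlt a ha hau).le
  have hΨleP : ∀ p ∈ P, Ψ p ≤ Ψ u := fun p hp => hull_bound Ψ hΨleV hp
  have hGface := isExtreme_face (P := P) Ψ (Ψ u) hΨleP
  have hGeq : {p | p ∈ P ∧ Ψ p = Ψ u} = {u} := by
    apply Set.Subset.antisymm
    · rintro p ⟨hpP, hpm⟩
      have hp' := mem_hull_filter Ψ hΨleV hpP hpm
      have hfil : (V.filter fun a => Ψ a = Ψ u) = {u} := by
        apply Finset.eq_singleton_iff_unique_mem.2
        refine ⟨Finset.mem_filter.2 ⟨huV, rfl⟩, fun a ha => ?_⟩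
        obtain ⟨haV, haeq⟩ := Finset.mem_filter.1 ha
        by_contra hau
        exact absurd haeq (ne_of_lt (hΨlt a haV hau))
      rw [hfil] at hp'
      simpa using hp'
    · rintro p rfl
      exact ⟨huP, rfl⟩
  have huvert : IsVertex P u := by
    rw [IsVertex]
    apply isExtreme_singleton.1
    rw [← hGeq]
    exact hGface
  refine ⟨u, ⟨⟨hx, huvert, Ne.symm hune, ?_⟩, ?_⟩⟩
  · rw [← hFeq]
    exact hface
  · have := (Finset.mem_filter.1 huS).2
    exact this

end ImpNbrLemma

set_option maxHeartbeats 1000000 in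
/-- The shadow no-escape lemma: if `x` is on the upper hull (maximizes `c - λ1·v`)
and every `v`-improving neighbor has slope at most `λ2 ≤ λ1`, then `x` maximizes
`c - λ2·v` globally. -/
lemma core {V : Finset (Fin n → ℝ)} {x c v : Fin n → ℝ} {l1 l2 : ℝ}
    (hx : IsVertex (convexHull ℝ (V : Set (Fin n → ℝ))) x)
    (hle : l2 ≤ l1)
    (hQ : ∀ y ∈ convexHull ℝ (V : Set (Fin n → ℝ)),
      dotR c y - dotR c x ≤ l1 * (dotR v y - dotR v x))
    (hnb : ∀ u, ImpNbr (convexHull ℝ (V : Set (Fin n → ℝ))) v x u →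
      dotR c u - dotR c x ≤ l2 * (dotR v u - dotR v x)) :
    ∀ y ∈ convexHull ℝ (V : Set (Fin n → ℝ)),
      dotR c y - dotR c x ≤ l2 * (dotR v y - dotR v x) := by
  intro y hy
  by_contra hcon
  push_neg at hcon
  have hQy := hQ y hy
  rcases eq_or_lt_of_le hle with heq | hlt
  · rw [heq] at hcon; linarith
  have hvy : 0 < dotR v y - dotR v x := by nlinarith
  set μ : ℝ := (dotR c y - dotR c x) / (dotR v y - dotR v x) with hμ
  have hμgt : l2 < μ := (lt_div_iff₀ hvy).2 (by linarith)
  set lm : ℝ := (l2 + min μ l1) / 2 with hlm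
  have hminl : l2 < min μ l1 := lt_min hμgt hlt
  have hlm1 : l2 < lm := by rw [hlm]; linarith
  have hlm2 : lm < μ := by
    have h1 := min_le_left μ l1
    rw [hlm]; linarith
  have hlm3 : lm < l1 := by
    have h1 := min_le_right μ l1
    rw [hlm]; linarith
  have hcy : dotR c y - dotR c x = μ * (dotR v y - dotR v x) := by
    rw [hμ, div_mul_cancel₀ _ (ne_of_gt hvy)]
  have hwy : dotR (c - lm • v) x < dotR (c - lm • v) y := by
    rw [dotR_sub_smul_left, dotR_sub_smul_left]
    nlinarith
  obtain ⟨u, hAdj, hwu⟩ := exists_impNbr hx hy hwy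
  rw [dotR_sub_smul_left, dotR_sub_smul_left] at hwu
  by_cases hvu : dotR v x < dotR v u
  · have himp : ImpNbr (convexHull ℝ (V : Set (Fin n → ℝ))) v x u := ⟨hAdj, hvu⟩
    have h2 := hnb u himp
    nlinarith [mul_lt_mul_of_pos_right hlm1 (sub_pos.2 hvu)]
  · push_neg at hvu
    have huP : u ∈ convexHull ℝ (V : Set (Fin n → ℝ)) := hAdj.2.1.1
    have hQu := hQ u huP
    nlinarith [mul_le_mul_of_nonpos_right (le_of_lt hlm3) (sub_nonpos.2 hvu)]

/-- For a 0/1 vector, the dot product with the all-ones vector counts the ones. -/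
lemma dot_ones {p : Fin n → ℝ} (h : ∀ i, p i = 0 ∨ p i = 1) :
    dotR (fun _ => (1:ℝ)) p = ((Finset.univ.filter fun i => p i = 1).card : ℝ) := by
  rw [dotR]
  simp only [one_mul]
  rw [← Finset.sum_filter_add_sum_filter_not Finset.univ (fun i => p i = 1)]
  have h1 : ∑ i ∈ Finset.univ.filter (fun i => p i = 1), p i
      = ((Finset.univ.filter fun i => p i = 1).card : ℝ) := by
    rw [Finset.sum_congr rfl (fun i hi => (Finset.mem_filter.1 hi).2)]
    simp
  have h2 : ∑ i ∈ Finset.univ.filter (fun i => ¬ p i = 1), p i = 0 :=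
    Finset.sum_eq_zero fun i hi => (h i).resolve_right (Finset.mem_filter.1 hi).2
  rw [h1, h2, add_zero]

/-- For a 0/1 vector, the `c`-value is the sum of `c` over the support. -/
lemma dot_c01 {c p : Fin n → ℝ} (h : ∀ i, p i = 0 ∨ p i = 1) :
    dotR c p = ∑ i ∈ Finset.univ.filter (fun i => p i = 1), c i := by
  rw [dotR]
  rw [← Finset.sum_filter_add_sum_filter_not Finset.univ (fun i => p i = 1)]
  have h1 : ∑ i ∈ Finset.univ.filter (fun i => p i = 1), c i * p i
      = ∑ i ∈ Finset.univ.filter (fun i => p i = 1), c i :=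
    Finset.sum_congr rfl fun i hi => by rw [(Finset.mem_filter.1 hi).2, mul_one]
  have h2 : ∑ i ∈ Finset.univ.filter (fun i => ¬ p i = 1), c i * p i = 0 :=
    Finset.sum_eq_zero fun i hi => by
      rw [(h i).resolve_right (Finset.mem_filter.1 hi).2, mul_zero]
  rw [h1, h2, add_zero]

end Slim

open Slim in
set_option maxHeartbeats 2000000 in
/-- Lemma 3.7: if `0` is a vertex of the 0/1 polytope and every vertex has at most
`M` coordinates equal to `1`, then the Slim Shadow rule starting at `0` (with
auxiliary vector `v = 1`) takes at most `M` steps and reaches a `c`-maximum. -/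
theorem slim_shadow_from_zero_bound {n : ℕ} (P : Set (Fin n → ℝ)) (hP : IsPolytope01 P)
    (h0 : IsVertex P 0) (M : ℕ)
    (hM : ∀ u, IsVertex P u → (Finset.univ.filter fun i : Fin n => u i = 1).card ≤ M)
    (c : Fin n → ℝ) (v : Fin n → ℝ) (hv : v = fun _ => 1) :
    ∀ (k : ℕ) (x : ℕ → Fin n → ℝ), ShadowPath P c v k x → x 0 = 0 →
      k ≤ M ∧ ∃ i ≤ k, ∀ y ∈ P, dotR c y ≤ dotR c (x i) := by
  obtain ⟨V, hVne, hV01, hPe⟩ := hP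
  subst hPe
  subst hv
  intro k x hpath hx0
  obtain ⟨hvert, hstep, hend⟩ := hpath
  set P : Set (Fin n → ℝ) := convexHull ℝ (V : Set (Fin n → ℝ)) with hPdef
  set v : Fin n → ℝ := fun _ => (1:ℝ) with hvdef
  -- vertices are 0/1 vectors
  have h01 : ∀ p, IsVertex P p → ∀ i, p i = 0 ∨ p i = 1 := by
    intro p hp i
    have : p ∈ V := by exact_mod_cast extremePoints_convexHull_subset hp
    exact hV01 p this i
  -- Part 1 : the length bound
  have hones : ∀ i ≤ k, dotR v (x i)
      = ((Finset.univ.filter fun j => x i j = 1).card : ℝ) := by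
    intro i hik
    exact dot_ones (h01 (x i) (hvert i hik))
  have hstrict : ∀ i < k, (Finset.univ.filter fun j => x i j = 1).card
      < (Finset.univ.filter fun j => x (i+1) j = 1).card := by
    intro i hik
    have h1 := (hstep i hik).1.2
    rw [hones i (le_of_lt hik), hones (i+1) (Nat.succ_le_of_lt hik)] at h1
    exact_mod_cast h1
  have hgrow : ∀ i ≤ k, i ≤ (Finset.univ.filter fun j => x i j = 1).card := by
    intro i
    induction i with
    | zero => intro _; exact Nat.zero_le _
    | succ m ih =>
      intro hmk
      have h1 := ih (Nat.le_of_succ_le hmk)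
      have h2 := hstrict m (Nat.lt_of_succ_le hmk)
      omega
  have hpart1 : k ≤ M := le_trans (hgrow k (le_refl k)) (hM (x k) (hvert k (le_refl k)))
  refine ⟨hpart1, ?_⟩
  -- Part 2 : the path contains a c-maximum
  set C : ℝ := ∑ i, |c i| with hC
  have hC0 : 0 ≤ C := Finset.sum_nonneg fun i _ => abs_nonneg _
  -- base of the invariant
  have hbase : ∀ y ∈ P, dotR c y - dotR c (x 0) ≤ C * (dotR v y - dotR v (x 0)) := by
    intro y hy
    have hgen : ∀ a ∈ V, (dotLin c - C • dotLin v) a ≤ 0 := by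
      intro a ha
      have ha01 : ∀ i, a i = 0 ∨ a i = 1 := hV01 a ha
      have hca : dotR c a = ∑ i ∈ Finset.univ.filter (fun i => a i = 1), c i := dot_c01 ha01
      have hva : dotR v a = ((Finset.univ.filter fun i => a i = 1).card : ℝ) := dot_ones ha01
      have hle1 : dotR c a ≤ ∑ i ∈ Finset.univ.filter (fun i => a i = 1), |c i| := by
        rw [hca]; exact Finset.sum_le_sum fun i _ => le_abs_self _
      have hle2 : ∑ i ∈ Finset.univ.filter (fun i => a i = 1), |c i| ≤ C := by
        rw [hC]
        exact Finset.sum_le_sum_of_subset_of_nonneg (Finset.filter_subset _ _)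
          (fun i _ _ => abs_nonneg _)
      simp only [LinearMap.sub_apply, LinearMap.smul_apply, dotLin_apply, smul_eq_mul]
      rcases Nat.eq_zero_or_pos (Finset.univ.filter fun i => a i = 1).card with hc0 | hc1
      · rw [Finset.card_eq_zero] at hc0
        rw [hca, hc0, Finset.sum_empty, hva, hc0]
        simp
      · have h1c : (1:ℝ) ≤ ((Finset.univ.filter fun i => a i = 1).card : ℝ) := by
          exact_mod_cast hc1
        have : C ≤ C * dotR v a := by
          rw [hva]; exact le_mul_of_one_le_right hC0 h1c
        linarith
    have := hull_bound (dotLin c - C • dotLin v) hgen hy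
    simp only [LinearMap.sub_apply, LinearMap.smul_apply, dotLin_apply, smul_eq_mul] at this
    rw [hx0]
    simp only [dotR_zero_right]
    linarith
  -- the inductive invariant
  have hInv : ∀ i, i ≤ k →
      (∃ lam : ℝ, 0 ≤ lam ∧
        ∀ y ∈ P, dotR c y - dotR c (x i) ≤ lam * (dotR v y - dotR v (x i))) ∨
      (∃ j ≤ i, ∀ y ∈ P, dotR c y ≤ dotR c (x j)) := by
    intro i
    induction i with
    | zero => intro _; exact Or.inl ⟨C, hC0, hbase⟩
    | succ m ih =>
      intro hm1k
      have hmk : m ≤ k := Nat.le_of_succ_le hm1k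
      have hmltk : m < k := Nat.lt_of_succ_le hm1k
      rcases ih hmk with ⟨lam, hlam0, hQ⟩ | ⟨j, hj, hopt⟩
      · obtain ⟨hImp, hmax⟩ := hstep m hmltk
        have hdv : 0 < dotR v (x (m+1)) - dotR v (x m) := sub_pos.2 hImp.2
        set lam' : ℝ := (dotR c (x (m+1)) - dotR c (x m)) /
          (dotR v (x (m+1)) - dotR v (x m)) with hlam'
        have hm1P : x (m+1) ∈ P := (hvert (m+1) hm1k).1
        have hlam'le : lam' ≤ lam := by
          rw [hlam']
          exact (div_le_iff₀ hdv).2 (by linarith [hQ (x (m+1)) hm1P])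
        have hnb' : ∀ u, ImpNbr P v (x m) u →
            dotR c u - dotR c (x m) ≤ lam' * (dotR v u - dotR v (x m)) := by
          intro u hu
          have h1 := hmax u hu
          have hvu : 0 < dotR v u - dotR v (x m) := sub_pos.2 hu.2
          rw [dotR_sub_right, dotR_sub_right, dotR_sub_right, dotR_sub_right] at h1
          rw [hlam']
          exact (div_le_iff₀ hvu).1 h1
        have hxmv : IsVertex P (x m) := hvert m hmk
        by_cases hpos : 0 < lam'
        · have hQ' := core hxmv hlam'le hQ hnb'
          refine Or.inl ⟨lam', hpos.le, ?_⟩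
          intro y hy
          have h2 := hQ' y hy
          have heqstep : dotR c (x (m+1)) - dotR c (x m)
              = lam' * (dotR v (x (m+1)) - dotR v (x m)) := by
            rw [hlam', div_mul_cancel₀ _ (ne_of_gt hdv)]
          nlinarith [h2, heqstep]
        · push_neg at hpos
          refine Or.inr ⟨m, Nat.le_succ_of_le (le_refl m), ?_⟩
          have hnb0 : ∀ u, ImpNbr P v (x m) u →
              dotR c u - dotR c (x m) ≤ 0 * (dotR v u - dotR v (x m)) := by
            intro u hu
            have h1 := hnb' u hu
            have hvu : 0 < dotR v u - dotR v (x m) := sub_pos.2 hu.2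
            nlinarith [mul_nonpos_of_nonpos_of_nonneg hpos (le_of_lt hvu)]
          have hQ0 := core hxmv hlam0 hQ hnb0
          intro y hy
          have h3 := hQ0 y hy
          linarith [h3]
      · exact Or.inr ⟨j, le_trans hj (Nat.le_succ m), hopt⟩
  rcases hInv k (le_refl k) with ⟨lam, hlam0, hQ⟩ | ⟨j, hj, hopt⟩
  · refine ⟨k, le_refl k, ?_⟩
    have hnb0 : ∀ u, ImpNbr P v (x k) u →
        dotR c u - dotR c (x k) ≤ 0 * (dotR v u - dotR v (x k)) :=
      fun u hu => absurd hu (hend u)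
    have hQ0 := core (hvert k (le_refl k)) hlam0 hQ hnb0
    intro y hy
    have h3 := hQ0 y hy
    linarith [h3]
  · exact ⟨j, hj, hopt⟩
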